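/- Let σ be a density matrix and {f_k}_{k=1}^m a POVM measurement, i.e., Σ_k f_k* f_k = Id. Then the componentwise sum of the decreasingly ordered spectra Σ_k Sp(f_k σ f_k*) majorizes Sp(σ). In other words, a generalized measurement whose results are recorded increases the spectrum in expectation in the majorization order. -/

import Mathlib

open scoped ComplexOrder

open Matrix Finset in
/-- `u` rearranged in decreasing order. -/
noncomputable def sortDesc {n : ℕ} (u : Fin n → ℝ) : Fin n → ℝ :=
  fun i => u (Tuple.sort u i.rev)

open Finset

lemma sum_sortDesc {n : ℕ} (u : Fin n → ℝ) : ∑ i, sortDesc u i = ∑ i, u i := by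
  rw [show (sortDesc u) = u ∘ (Fin.revPerm.trans (Tuple.sort u)) from rfl]
  exact Equiv.sum_comp _ u

lemma antitone_sortDesc {n : ℕ} (u : Fin n → ℝ) : Antitone (sortDesc u) := by
  intro i j hij
  exact Tuple.monotone_sort u (by simpa [Fin.rev_le_rev] using hij)

lemma filter_lt_eq_Iio {n t : ℕ} (ht : t < n) :
    univ.filter (fun i : Fin n => (i : ℕ) < t) = Finset.Iio ⟨t, ht⟩ := by
  ext i
  simp [Fin.lt_def]

lemma greedy_antitone {n t : ℕ} (μ x : Fin n → ℝ) (hμa : Antitone μ) (hμ0 : ∀ i, 0 ≤ μ i)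
    (hx0 : ∀ i, 0 ≤ x i) (hx1 : ∀ i, x i ≤ 1) (hxs : ∑ i, x i ≤ t) :
    ∑ i, μ i * x i ≤ ∑ i ∈ univ.filter (fun i : Fin n => (i : ℕ) < t), μ i := by
  by_cases ht : t < n
  · set c : ℝ := μ ⟨t, ht⟩ with hc
    have hc0 : 0 ≤ c := hμ0 _
    set s := univ.filter (fun i : Fin n => (i : ℕ) < t) with hs
    have hcard : s.card = t := by rw [hs, filter_lt_eq_Iio ht, Fin.card_Iio]
    have key : ∑ i, μ i * x i - ∑ i ∈ s, μ i ≤ c * (∑ i, x i - t) := by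
      have hsplit : ∑ i, μ i * x i = ∑ i ∈ s, μ i * x i + ∑ i ∈ sᶜ, μ i * x i :=
        (Finset.sum_add_sum_compl s _).symm
      have hxsplit : ∑ i, x i = ∑ i ∈ s, x i + ∑ i ∈ sᶜ, x i :=
        (Finset.sum_add_sum_compl s _).symm
      have h1 : ∑ i ∈ s, (μ i * x i - μ i) ≤ ∑ i ∈ s, c * (x i - 1) := by
        apply Finset.sum_le_sum
        intro i hi
        have hit : (i : ℕ) < t := by simpa [hs] using hi
        have hle : c ≤ μ i := hμa (by simp [Fin.le_def, hit.le])
        have : μ i * (x i - 1) ≤ c * (x i - 1) :=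
          mul_le_mul_of_nonpos_right hle (by linarith [hx1 i])
        linarith [this]
      have h2 : ∑ i ∈ sᶜ, μ i * x i ≤ ∑ i ∈ sᶜ, c * x i := by
        apply Finset.sum_le_sum
        intro i hi
        have hit : ¬ (i : ℕ) < t := by simpa [hs] using hi
        have hle : μ i ≤ c := hμa (by simp [Fin.le_def]; omega)
        exact mul_le_mul_of_nonneg_right hle (hx0 i)
      have e1 : ∑ i ∈ s, (μ i * x i - μ i) = ∑ i ∈ s, μ i * x i - ∑ i ∈ s, μ i :=
        Finset.sum_sub_distrib _ _
      have e2 : ∑ i ∈ s, c * (x i - 1) + ∑ i ∈ sᶜ, c * x i = c * (∑ i, x i - t) := by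
        rw [← Finset.mul_sum, ← Finset.mul_sum, ← mul_add]
        congr 1
        rw [Finset.sum_sub_distrib, Finset.sum_const, hcard, nsmul_eq_mul, mul_one]
        linarith [hxsplit]
      linarith [h1, h2, e1.symm ▸ h1]
    nlinarith [key, mul_nonneg hc0 (sub_nonneg.mpr hxs), hxs, hc0]
  · push_neg at ht
    have hfil : univ.filter (fun i : Fin n => (i : ℕ) < t) = univ := by
      apply filter_true_of_mem
      intro i _
      exact lt_of_lt_of_le i.isLt ht
    rw [hfil]
    apply Finset.sum_le_sum
    intro i _
    calc μ i * x i ≤ μ i * 1 := mul_le_mul_of_nonneg_left (hx1 i) (hμ0 i)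
      _ = μ i := mul_one _
open Matrix Finset

variable {n : ℕ}

lemma diag_re_nonneg {M : Matrix (Fin n) (Fin n) ℂ} (hM : M.PosSemidef) (i : Fin n) :
    0 ≤ (M i i).re := by
  have h := hM.re_dotProduct_nonneg (Pi.single i 1)
  have hs : star (Pi.single i 1 : Fin n → ℂ) = Pi.single i 1 := by
    funext j; simp [Pi.single_apply, apply_ite (star : ℂ → ℂ)]
  rw [hs] at h
  simpa [Matrix.mulVec_single, single_dotProduct] using h

lemma trace_re_nonneg {M : Matrix (Fin n) (Fin n) ℂ} (hM : M.PosSemidef) :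
    0 ≤ M.trace.re := by
  rw [Matrix.trace, Complex.re_sum]
  exact Finset.sum_nonneg fun i _ => diag_re_nonneg hM i

open scoped MatrixOrder in
lemma trace_mul_re_nonneg {A Q : Matrix (Fin n) (Fin n) ℂ} (hA : A.PosSemidef)
    (hQ : Q.PosSemidef) : 0 ≤ (A * Q).trace.re := by
  have h1 : A * Q = A * CFC.sqrt Q * CFC.sqrt Q := by rw [mul_assoc, CFC.sqrt_mul_sqrt_self Q hQ.nonneg]
  have h2 : (A * CFC.sqrt Q * CFC.sqrt Q).trace = (CFC.sqrt Q * A * CFC.sqrt Q).trace := by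
    rw [trace_mul_cycle]
  have h3 : (CFC.sqrt Q * A * CFC.sqrt Q).PosSemidef := by
    have := hA.conjTranspose_mul_mul_same (CFC.sqrt Q)
    rwa [(CFC.sqrt_nonneg Q).posSemidef.1] at this
  rw [h1, h2]
  exact trace_re_nonneg h3

/-- Conjugate a real diagonal by a unitary. -/
noncomputable def conjU (U : Matrix.unitaryGroup (Fin n) ℂ) (w : Fin n → ℝ) :
    Matrix (Fin n) (Fin n) ℂ :=
  (U : Matrix (Fin n) (Fin n) ℂ) * diagonal (RCLike.ofReal ∘ w) * star (U : Matrix (Fin n) (Fin n) ℂ)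

lemma spectral_conjU {A : Matrix (Fin n) (Fin n) ℂ} (hA : A.IsHermitian) :
    A = conjU hA.eigenvectorUnitary hA.eigenvalues := hA.spectral_theorem

lemma conjU_mul (U : Matrix.unitaryGroup (Fin n) ℂ) (w v : Fin n → ℝ) :
    conjU U w * conjU U v = conjU U (w * v) := by
  have hU : star (U : Matrix (Fin n) (Fin n) ℂ) * U = 1 := mem_unitaryGroup_iff'.mp U.2
  simp only [conjU]
  rw [Matrix.mul_assoc, Matrix.mul_assoc, ← Matrix.mul_assoc (star (U : Matrix (Fin n) (Fin n) ℂ)),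
    ← Matrix.mul_assoc (star (U : Matrix (Fin n) (Fin n) ℂ)), hU, Matrix.one_mul,
    ← Matrix.mul_assoc, ← Matrix.mul_assoc, Matrix.mul_assoc _ _ (diagonal _)]
  have hd : diagonal (RCLike.ofReal ∘ w : Fin n → ℂ) * diagonal (RCLike.ofReal ∘ v) =
      diagonal (RCLike.ofReal ∘ (w * v)) := by
    rw [diagonal_mul_diagonal]
    exact congrArg Matrix.diagonal (funext fun i => by simp [Function.comp, Pi.mul_apply])
  rw [hd]

lemma conjU_sub (U : Matrix.unitaryGroup (Fin n) ℂ) (w v : Fin n → ℝ) :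
    conjU U w - conjU U v = conjU U (w - v) := by
  simp only [conjU]
  rw [← Matrix.sub_mul, ← Matrix.mul_sub]
  have hd : diagonal (RCLike.ofReal ∘ w : Fin n → ℂ) - diagonal (RCLike.ofReal ∘ v) =
      diagonal (RCLike.ofReal ∘ (w - v)) := by
    rw [diagonal_sub]
    exact congrArg Matrix.diagonal (funext fun i => by simp [Function.comp, Pi.sub_apply])
  rw [hd]

lemma conjU_one (U : Matrix.unitaryGroup (Fin n) ℂ) : conjU U 1 = 1 := by
  have hU : (U : Matrix (Fin n) (Fin n) ℂ) * star (U : Matrix (Fin n) (Fin n) ℂ) = 1 :=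
    mem_unitaryGroup_iff.mp U.2
  simp only [conjU]
  have : diagonal (RCLike.ofReal ∘ (1 : Fin n → ℝ)) = (1 : Matrix (Fin n) (Fin n) ℂ) := by
    ext i j
    simp [Matrix.diagonal_apply, Matrix.one_apply]
  rw [this, Matrix.mul_one, hU]

lemma conjU_trace (U : Matrix.unitaryGroup (Fin n) ℂ) (w : Fin n → ℝ) :
    (conjU U w).trace = ((∑ i, w i : ℝ) : ℂ) := by
  have hU : star (U : Matrix (Fin n) (Fin n) ℂ) * U = 1 := mem_unitaryGroup_iff'.mp U.2
  rw [conjU, trace_mul_cycle, hU, Matrix.one_mul, trace_diagonal]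
  push_cast
  rfl

lemma conjU_posSemidef (U : Matrix.unitaryGroup (Fin n) ℂ) {w : Fin n → ℝ}
    (hw : ∀ i, 0 ≤ w i) : (conjU U w).PosSemidef := by
  have hd : (diagonal (RCLike.ofReal ∘ w : Fin n → ℂ)).PosSemidef := by
    apply Matrix.PosSemidef.diagonal
    intro i
    simpa using Complex.zero_le_real.mpr (hw i)
  have := hd.mul_mul_conjTranspose_same (U : Matrix (Fin n) (Fin n) ℂ)
  rwa [← Matrix.star_eq_conjTranspose] at this

lemma conjU_rank_le (U : Matrix.unitaryGroup (Fin n) ℂ) (w : Fin n → ℝ) :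
    (conjU U w).rank ≤ (univ.filter (fun i => w i ≠ 0)).card := by
  classical
  calc (conjU U w).rank ≤ ((U : Matrix (Fin n) (Fin n) ℂ) * diagonal (RCLike.ofReal ∘ w)).rank :=
        Matrix.rank_mul_le_left _ _
    _ ≤ (diagonal (RCLike.ofReal ∘ w : Fin n → ℂ)).rank := Matrix.rank_mul_le_right _ _
    _ = Fintype.card {i // (RCLike.ofReal ∘ w : Fin n → ℂ) i ≠ 0} := Matrix.rank_diagonal _
    _ = (univ.filter (fun i => w i ≠ 0)).card := by
        rw [Fintype.card_subtype]
        congr 1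
        apply Finset.filter_congr
        intro i _
        simp

lemma greedy_sorted {t : ℕ} (μ x : Fin n → ℝ) (hμ0 : ∀ i, 0 ≤ μ i)
    (hx0 : ∀ i, 0 ≤ x i) (hx1 : ∀ i, x i ≤ 1) (hxs : ∑ i, x i ≤ t) :
    ∑ i, μ i * x i ≤ ∑ i ∈ univ.filter (fun i : Fin n => (i : ℕ) < t), sortDesc μ i := by
  set e : Equiv.Perm (Fin n) := Fin.revPerm.trans (Tuple.sort μ) with he
  have h1 : ∑ i, μ i * x i = ∑ i, sortDesc μ i * (x ∘ e) i := by
    rw [← Equiv.sum_comp e (fun j => μ j * x j)]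
    rfl
  have h2 : ∑ i, (x ∘ e) i = ∑ i, x i := Equiv.sum_comp e x
  rw [h1]
  exact greedy_antitone (sortDesc μ) (x ∘ e) (antitone_sortDesc μ) (fun i => hμ0 _)
    (fun i => hx0 _) (fun i => hx1 _) (h2 ▸ hxs)

lemma kyfan {t : ℕ} (C X : Matrix (Fin n) (Fin n) ℂ) (hC : C.PosSemidef) (hX : X.PosSemidef)
    (hX1 : (1 - X).PosSemidef) (hXt : X.trace.re ≤ t) :
    (C * X).trace.re ≤
      ∑ i ∈ univ.filter (fun i : Fin n => (i : ℕ) < t), sortDesc hC.1.eigenvalues i := by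
  set U := hC.1.eigenvectorUnitary with hUdef
  set lam := hC.1.eigenvalues with hlam
  have hU1 : star (U : Matrix (Fin n) (Fin n) ℂ) * U = 1 := mem_unitaryGroup_iff'.mp U.2
  have hU2 : (U : Matrix (Fin n) (Fin n) ℂ) * star (U : Matrix (Fin n) (Fin n) ℂ) = 1 :=
    mem_unitaryGroup_iff.mp U.2
  set M := star (U : Matrix (Fin n) (Fin n) ℂ) * X * U with hM
  have hMpsd : M.PosSemidef := by
    have := hX.conjTranspose_mul_mul_same (U : Matrix (Fin n) (Fin n) ℂ)
    rwa [← Matrix.star_eq_conjTranspose] at this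
  have hM1psd : (1 - M).PosSemidef := by
    have h1M : (1 : Matrix (Fin n) (Fin n) ℂ) - M
        = star (U : Matrix (Fin n) (Fin n) ℂ) * (1 - X) * U := by
      rw [Matrix.mul_sub, Matrix.sub_mul, Matrix.mul_one, hU1]
    rw [h1M]
    have := hX1.conjTranspose_mul_mul_same (U : Matrix (Fin n) (Fin n) ℂ)
    rwa [← Matrix.star_eq_conjTranspose] at this
  have htr : (C * X).trace = ∑ i, (lam i : ℂ) * M i i := by
    have hCeq : C = conjU U lam := spectral_conjU hC.1
    have e1 : C * X = (U : Matrix (Fin n) (Fin n) ℂ) *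
        (diagonal (RCLike.ofReal ∘ lam) * (star (U : Matrix (Fin n) (Fin n) ℂ) * X)) := by
      rw [hCeq]; simp only [conjU]; noncomm_ring
    have e2 : (diagonal (RCLike.ofReal ∘ lam) * (star (U : Matrix (Fin n) (Fin n) ℂ) * X)) *
        (U : Matrix (Fin n) (Fin n) ℂ) = diagonal (RCLike.ofReal ∘ lam) * M := by
      rw [hM]; noncomm_ring
    rw [e1, trace_mul_comm, e2, Matrix.trace]
    congr 1
    funext i
    simp [Matrix.diag, Matrix.diagonal_mul]
  have hMtr : M.trace = X.trace := by
    rw [hM, trace_mul_cycle, hU2, Matrix.one_mul]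
  set x : Fin n → ℝ := fun i => (M i i).re with hx
  have hre : (C * X).trace.re = ∑ i, lam i * x i := by
    rw [htr, Complex.re_sum]
    congr 1
    funext i
    simp [hx]
  rw [hre]
  apply greedy_sorted
  · exact fun i => hC.eigenvalues_nonneg i
  · exact fun i => diag_re_nonneg hMpsd i
  · intro i
    have := diag_re_nonneg hM1psd i
    have h1 : ((1 : Matrix (Fin n) (Fin n) ℂ) - M) i i = 1 - M i i := by
      simp [Matrix.sub_apply, Matrix.one_apply]
    rw [h1] at this
    simp only [Complex.sub_re, Complex.one_re] at this
    linarith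
  · have : ∑ i, x i = M.trace.re := by
      rw [Matrix.trace, Complex.re_sum]
      rfl
    rw [this, hMtr]
    exact hXt

lemma trace_le_kyfan {t : ℕ} (C D : Matrix (Fin n) (Fin n) ℂ) (hC : C.PosSemidef)
    (hD : D.PosSemidef) (hCD : (C - D).PosSemidef) (hrank : D.rank ≤ t) :
    D.trace.re ≤
      ∑ i ∈ univ.filter (fun i : Fin n => (i : ℕ) < t), sortDesc hC.1.eigenvalues i := by
  classical
  set V := hD.1.eigenvectorUnitary with hV
  set nu := hD.1.eigenvalues with hnu
  set ind : Fin n → ℝ := fun i => if nu i ≠ 0 then 1 else 0 with hind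
  set Q := conjU V ind with hQ
  have hQpsd : Q.PosSemidef := conjU_posSemidef V
    (fun i => by rcases eq_or_ne (nu i) 0 with h | h <;> simp [hind, h])
  have hQ1psd : (1 - Q).PosSemidef := by
    have h1 : (1 : Matrix (Fin n) (Fin n) ℂ) - Q = conjU V (1 - ind) := by
      rw [← conjU_one V, hQ, conjU_sub]
    rw [h1]
    apply conjU_posSemidef
    intro i
    rcases eq_or_ne (nu i) 0 with h | h <;> simp [hind, h]
  have hDeq : D = conjU V nu := spectral_conjU hD.1
  have hDQ : D * Q = D := by
    rw [hDeq, hQ, conjU_mul]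
    exact congrArg (conjU V)
      (funext fun i => by rcases eq_or_ne (nu i) 0 with h | h <;> simp [hind, h])
  have hQtr : Q.trace.re ≤ (t : ℝ) := by
    rw [hQ, conjU_trace, Complex.ofReal_re]
    have hb : ∑ i, ind i = ((univ.filter (fun i => nu i ≠ 0)).card : ℝ) := by
      rw [hind, Finset.sum_boole]
    rw [hb]
    have hcard : (univ.filter (fun i => nu i ≠ 0)).card = D.rank := by
      rw [hD.1.rank_eq_card_non_zero_eigs, Fintype.card_subtype]
    rw [hcard]
    exact_mod_cast hrank
  have h1 : D.trace.re = (D * Q).trace.re := by rw [hDQ]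
  have h2 : (D * Q).trace.re ≤ (C * Q).trace.re := by
    have h3 : 0 ≤ ((C - D) * Q).trace.re := trace_mul_re_nonneg hCD hQpsd
    have h4 : (C - D) * Q = C * Q - D * Q := Matrix.sub_mul _ _ _
    rw [h4, Matrix.trace_sub, Complex.sub_re] at h3
    linarith
  rw [h1]
  exact le_trans h2 (kyfan C Q hC hQpsd hQ1psd hQtr)

lemma sum_eigenvalues_eq_trace_re {A : Matrix (Fin n) (Fin n) ℂ} (hA : A.IsHermitian) :
    ∑ i, hA.eigenvalues i = A.trace.re := by
  have h := conjU_trace hA.eigenvectorUnitary hA.eigenvalues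
  rw [← spectral_conjU hA] at h
  rw [h, Complex.ofReal_re]

lemma sortDesc_of_antitone {u : Fin n → ℝ} (hu : Antitone u) : sortDesc u = u := by
  have hmono : Monotone (u ∘ Fin.revPerm) := by
    intro i j hij
    exact hu (by simpa [Fin.rev_le_rev] using hij)
  have h := (Tuple.comp_sort_eq_comp_iff_monotone (f := u) (σ := Fin.revPerm)).mpr hmono
  funext i
  have := congrFun h i.rev
  simp only [Function.comp_apply, Fin.revPerm_apply, Fin.rev_rev] at this
  exact (by simpa [sortDesc] using this.symm)

lemma filter_card_le {t : ℕ} : (univ.filter (fun i : Fin n => (i : ℕ) < t)).card ≤ t := by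
  have h := Finset.card_le_card_of_injOn (f := (Fin.val : Fin n → ℕ))
    (s := univ.filter (fun i : Fin n => (i : ℕ) < t)) (t := Finset.range t)
    (by intro a ha; simp at ha ⊢; exact ha)
    (fun a _ b _ hab => Fin.val_injective hab)
  simpa using h

open Finset in
/-- `u` majorizes `v`: every partial sum of the decreasing rearrangement of `u`
dominates that of `v`, and the total sums agree. -/
noncomputable def Majorizes {n : ℕ} (u v : Fin n → ℝ) : Prop :=
  (∀ k : ℕ, ∑ i ∈ Finset.univ.filter (fun i : Fin n => (i : ℕ) < k), sortDesc v i ≤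
      ∑ i ∈ Finset.univ.filter (fun i : Fin n => (i : ℕ) < k), sortDesc u i) ∧
  ∑ i, u i = ∑ i, v i

open Matrix in
/-- For a density matrix `σ` and a POVM measurement `{f k}` (`∑ k, (f k)ᴴ * f k = 1`),
the componentwise sum of the decreasingly ordered spectra of the outcomes
`f k * σ * (f k)ᴴ` majorizes the spectrum of `σ`. -/
theorem expected_spectrum_majorizes {n m : ℕ} (σ : Matrix (Fin n) (Fin n) ℂ)
    (hσ : σ.PosSemidef) (hσtr : σ.trace = 1)
    (f : Fin m → Matrix (Fin n) (Fin n) ℂ)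
    (hpovm : ∑ k, (f k)ᴴ * f k = 1) :
    Majorizes
      (fun i => ∑ k, sortDesc ((hσ.mul_mul_conjTranspose_same (f k)).1.eigenvalues) i)
      (hσ.1.eigenvalues) := by
  classical
  set lam := hσ.1.eigenvalues with hlam
  set U := hσ.1.eigenvectorUnitary with hU
  have hlam0 : ∀ j, 0 ≤ lam j := fun j => hσ.eigenvalues_nonneg j
  set u : Fin n → ℝ :=
    fun i => ∑ k, sortDesc ((hσ.mul_mul_conjTranspose_same (f k)).1.eigenvalues) i with hu
  have hu_anti : Antitone u := by
    intro i j hij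
    exact Finset.sum_le_sum fun k _ =>
      antitone_sortDesc ((hσ.mul_mul_conjTranspose_same (f k)).1.eigenvalues) hij
  -- each outcome trace identity
  have htrace_cycle : ∀ (B : Matrix (Fin n) (Fin n) ℂ) (k : Fin m),
      (B * ((f k)ᴴ * f k)).trace = (f k * B * (f k)ᴴ).trace := by
    intro B k
    rw [show B * ((f k)ᴴ * f k) = (B * (f k)ᴴ) * f k from by noncomm_ring,
      trace_mul_comm, ← Matrix.mul_assoc]
  have htrace_split : ∀ (B : Matrix (Fin n) (Fin n) ℂ),
      B.trace = ∑ k, (f k * B * (f k)ᴴ).trace := by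
    intro B
    have h0 : B.trace = (B * ∑ k, (f k)ᴴ * f k).trace := by rw [hpovm, Matrix.mul_one]
    rw [h0, Finset.mul_sum, trace_sum]
    exact Finset.sum_congr rfl fun k _ => htrace_cycle B k
  constructor
  · intro t
    set s := Tuple.sort lam with hsrt
    set e : Fin n → ℝ := fun j => if ((s.symm j).rev : ℕ) < t then 1 else 0 with he
    have he01 : ∀ j, e j = 0 ∨ e j = 1 := fun j => by
      by_cases h : ((s.symm j).rev : ℕ) < t
      · exact Or.inr (by simp only [he]; rw [if_pos h])
      · exact Or.inl (by simp only [he]; rw [if_neg h])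
    set B := conjU U (fun j => lam j * e j) with hB
    have hBpsd : B.PosSemidef := conjU_posSemidef U fun j => by
      rcases he01 j with h | h <;> simp [h, hlam0 j]
    have hσeq : σ = conjU U lam := spectral_conjU hσ.1
    have hσB : (σ - B).PosSemidef := by
      rw [hσeq, hB, conjU_sub]
      apply conjU_posSemidef
      intro j
      rcases he01 j with h | h <;> simp [Pi.sub_apply, h, hlam0 j]
    have hrankB : B.rank ≤ t := by
      calc B.rank ≤ (univ.filter (fun j => lam j * e j ≠ 0)).card := conjU_rank_le U _
        _ ≤ (univ.filter (fun j : Fin n => ((s.symm j).rev : ℕ) < t)).card := by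
            apply Finset.card_le_card
            intro j hj
            simp only [Finset.mem_filter, Finset.mem_univ, true_and] at hj ⊢
            by_contra h
            exact hj (by simp only [he]; rw [if_neg h, mul_zero])
        _ = (univ.filter (fun i : Fin n => (i : ℕ) < t)).card := by
            apply Finset.card_bij' (fun j _ => (s.symm j).rev) (fun i _ => s i.rev)
            · intro j hj
              simp only [Finset.mem_filter, Finset.mem_univ, true_and] at hj ⊢
              exact hj
            · intro i hi
              simp only [Finset.mem_filter, Finset.mem_univ, true_and,
                Equiv.symm_apply_apply, Fin.rev_rev] at hi ⊢
              exact hi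
            · intro j _
              simp only [Fin.rev_rev, Equiv.apply_symm_apply]
            · intro i _
              simp only [Equiv.symm_apply_apply, Fin.rev_rev]
        _ ≤ t := filter_card_le
    have htrB : B.trace.re = ∑ i ∈ univ.filter (fun i : Fin n => (i : ℕ) < t), sortDesc lam i := by
      rw [hB, conjU_trace, Complex.ofReal_re,
        ← Equiv.sum_comp (Fin.revPerm.trans s) (fun j => lam j * e j), Finset.sum_filter]
      apply Finset.sum_congr rfl
      intro i _
      have h1 : e (s i.rev) = if (i : ℕ) < t then 1 else 0 := by
        simp only [he, Equiv.symm_apply_apply, Fin.rev_rev]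
      have h2 : lam (s i.rev) = sortDesc lam i := rfl
      simp only [Equiv.trans_apply, Fin.revPerm_apply, h1, h2, mul_ite, mul_one, mul_zero]
    have key : ∀ k : Fin m, (f k * B * (f k)ᴴ).trace.re ≤
        ∑ i ∈ univ.filter (fun i : Fin n => (i : ℕ) < t),
          sortDesc ((hσ.mul_mul_conjTranspose_same (f k)).1.eigenvalues) i := by
      intro k
      apply trace_le_kyfan _ _ (hσ.mul_mul_conjTranspose_same (f k))
        (hBpsd.mul_mul_conjTranspose_same (f k))
      · have hdiff : f k * σ * (f k)ᴴ - f k * B * (f k)ᴴ = f k * (σ - B) * (f k)ᴴ := by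
          noncomm_ring
        rw [hdiff]
        exact hσB.mul_mul_conjTranspose_same (f k)
      · calc (f k * B * (f k)ᴴ).rank ≤ (f k * B).rank := Matrix.rank_mul_le_left _ _
          _ ≤ B.rank := Matrix.rank_mul_le_right _ _
          _ ≤ t := hrankB
    have hfinal : ∑ i ∈ univ.filter (fun i : Fin n => (i : ℕ) < t), sortDesc lam i ≤
        ∑ i ∈ univ.filter (fun i : Fin n => (i : ℕ) < t), u i := by
      rw [← htrB]
      have hre : B.trace.re = ∑ k, (f k * B * (f k)ᴴ).trace.re := by
        rw [htrace_split B, Complex.re_sum]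
      rw [hre, hu]
      rw [Finset.sum_comm]
      exact Finset.sum_le_sum fun k _ => key k
    calc ∑ i ∈ univ.filter (fun i : Fin n => (i : ℕ) < t), sortDesc lam i
        ≤ ∑ i ∈ univ.filter (fun i : Fin n => (i : ℕ) < t), u i := hfinal
      _ = ∑ i ∈ univ.filter (fun i : Fin n => (i : ℕ) < t), sortDesc u i := by
          rw [sortDesc_of_antitone hu_anti]
  · -- total sums agree
    rw [Finset.sum_comm]
    have h1 : ∀ k : Fin m, ∑ i, sortDesc ((hσ.mul_mul_conjTranspose_same (f k)).1.eigenvalues) i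
        = (f k * σ * (f k)ᴴ).trace.re := by
      intro k
      rw [sum_sortDesc, sum_eigenvalues_eq_trace_re]
    calc ∑ k, ∑ i, sortDesc ((hσ.mul_mul_conjTranspose_same (f k)).1.eigenvalues) i
        = ∑ k, (f k * σ * (f k)ᴴ).trace.re := Finset.sum_congr rfl fun k _ => h1 k
      _ = σ.trace.re := by rw [← Complex.re_sum, ← htrace_split σ]
      _ = ∑ i, lam i := (sum_eigenvalues_eq_trace_re hσ.1).symm
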